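/- Let A be an N×N matrix with integer entries and let A_- be the (N+2)×(N+2) Cuntz splice matrix obtained from A. Then det(1 - A_-) = -det(1 - A). -/
import Mathlib


/-- Cuntz splice of an `M × M` matrix `B` (`M = m+1`): the `(M+2) × (M+2)` matrix whose
upper-left `M × M` block is `B`, with (1-based) entries
`B₋(M,M+1) = B₋(M+1,M) = B₋(M+1,M+1) = B₋(M+1,M+2) = B₋(M+2,M+1) = B₋(M+2,M+2) = 1`
and all other new entries `0`. -/
def cuntzSplice {m : ℕ} (B : Matrix (Fin (m+1)) (Fin (m+1)) ℤ) :
    Matrix (Fin (m+3)) (Fin (m+3)) ℤ :=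
  Matrix.of fun i j =>
    if hi : (i : ℕ) < m + 1 then
      if hj : (j : ℕ) < m + 1 then B ⟨i, hi⟩ ⟨j, hj⟩
      else if (i : ℕ) = m ∧ (j : ℕ) = m + 1 then 1 else 0
    else
      if (i : ℕ) = m + 1 then
        if (j : ℕ) = m ∨ (j : ℕ) = m + 1 ∨ (j : ℕ) = m + 2 then 1 else 0
      else
        if (j : ℕ) = m + 1 ∨ (j : ℕ) = m + 2 then 1 else 0

section aux
variable {n : ℕ}

def csB (n : ℕ) : Matrix (Fin (n+1)) (Fin 2) ℤ :=
  fun i j => if i = Fin.last n ∧ j = 0 then -1 else 0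

def csC (n : ℕ) : Matrix (Fin 2) (Fin (n+1)) ℤ :=
  fun i j => if i = 0 ∧ j = Fin.last n then -1 else 0

def csD : Matrix (Fin 2) (Fin 2) ℤ := !![0,-1;-1,0]

instance : Invertible csD := ⟨csD, by decide, by decide⟩

lemma cs_block (A : Matrix (Fin (n+1)) (Fin (n+1)) ℤ) :
    ((1 : Matrix (Fin (n+3)) (Fin (n+3)) ℤ) - cuntzSplice A).submatrix
        (finSumFinEquiv : Fin (n+1) ⊕ Fin 2 ≃ Fin (n+3)) (finSumFinEquiv : Fin (n+1) ⊕ Fin 2 ≃ Fin (n+3))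
      = Matrix.fromBlocks (1 - A) (csB n) (csC n) csD := by
  ext i j
  rcases i with i | i <;> rcases j with j | j
  · simp only [Matrix.submatrix_apply, finSumFinEquiv_apply_left, Matrix.fromBlocks_apply₁₁,
      Matrix.sub_apply, Matrix.one_apply, cuntzSplice, Matrix.of_apply, Fin.coe_castAdd]
    rw [dif_pos i.isLt, dif_pos j.isLt]
    simp [Fin.ext_iff]
  · fin_cases j <;>
    · simp only [Matrix.submatrix_apply, finSumFinEquiv_apply_left, finSumFinEquiv_apply_right,
        Matrix.fromBlocks_apply₁₂, Matrix.sub_apply, Matrix.one_apply, cuntzSplice,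
        Matrix.of_apply, Fin.coe_castAdd, Fin.coe_natAdd, csB]
      rw [dif_pos i.isLt]
      have hi := i.isLt
      rcases eq_or_ne (i : ℕ) n with h | h <;>
        simp_all [Fin.ext_iff, Fin.val_last] <;> omega
  · fin_cases i <;>
    · simp only [Matrix.submatrix_apply, finSumFinEquiv_apply_left, finSumFinEquiv_apply_right,
        Matrix.fromBlocks_apply₂₁, Matrix.sub_apply, Matrix.one_apply, cuntzSplice,
        Matrix.of_apply, Fin.coe_castAdd, Fin.coe_natAdd, csC]
      have hj := j.isLt
      rcases eq_or_ne (j : ℕ) n with h | h <;>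
        simp_all [Fin.ext_iff, Fin.val_last] <;> omega
  · fin_cases i <;> fin_cases j <;>
      simp [cuntzSplice, Matrix.one_apply, csD, Fin.ext_iff]

end aux

/-- `det(1 - A₋) = -det(1 - A)`: the Cuntz splice flips the sign of `det(1 - A)`. -/
theorem det_one_sub_cuntzSplice {n : ℕ} (A : Matrix (Fin (n+1)) (Fin (n+1)) ℤ) :
    ((1 : Matrix (Fin (n+3)) (Fin (n+3)) ℤ) - cuntzSplice A).det
      = -((1 : Matrix (Fin (n+1)) (Fin (n+1)) ℤ) - A).det := by
  have h := congrArg Matrix.det (cs_block A)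
  rw [Matrix.det_submatrix_equiv_self] at h
  rw [h, Matrix.det_fromBlocks₂₂]
  have hD : csD.det = -1 := by decide
  have hBC : csB n * ⅟csD * csC n = 0 := by
    have hinv : (⅟csD) = csD := rfl
    rw [hinv]
    ext i j
    simp [Matrix.mul_apply, Fin.sum_univ_two, csB, csC, csD]
  rw [hBC, sub_zero, hD]
  ring
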